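/- Let $U:\mathbb{T}\to\mathbb{R}$ be continuous with $U(z)=U(\pi-z)$ for all $z$, let $\rho > 0$, and define $\xi(a) = \int_{-\pi}^{\pi} (\cos(z) - a) e^{-U(z) + \rho a \cos(z)} dz$ for $a \in \mathbb{R}$. Then $\xi$ admits the power series expansion $\xi(a) = \sum_{n \geq 0} \frac{a^{2n+1} \rho^{2n}}{(2n)!} I(2n) \left( \frac{\rho I(2n+2)}{(2n+1) I(2n)} - 1 \right)$, where $I(k) = \int_{-\pi}^{\pi} \cos^k(z) e^{-U(z)} dz$; in particular $\xi$ is an odd function of $a$. -/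

import Mathlib

open Real MeasureTheory

/-- Power series expansion of `ξ(a) = ∫ (cos z - a) e^{-U(z) + ρ a cos z} dz` for a
symmetric potential `U`, in terms of the even moments `I(2n) = ∫ cos^{2n} e^{-U}`;
in particular `ξ` is an odd function of `a`. -/
theorem stmt6 (U : ℝ → ℝ) (hU : Continuous U) (hper : Function.Periodic U (2 * π))
    (hsym : ∀ z, U z = U (π - z)) (ρ : ℝ) (hρ : 0 < ρ) :
    (∀ a : ℝ,
      (∫ z in (-π)..π, (cos z - a) * exp (-U z + ρ * a * cos z)) =
      ∑' n : ℕ, (a ^ (2 * n + 1) * ρ ^ (2 * n) / (Nat.factorial (2 * n) : ℝ))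
        * (∫ z in (-π)..π, cos z ^ (2 * n) * exp (-U z))
        * (ρ * (∫ z in (-π)..π, cos z ^ (2 * n + 2) * exp (-U z))
            / ((2 * (n : ℝ) + 1) * ∫ z in (-π)..π, cos z ^ (2 * n) * exp (-U z)) - 1)) ∧
    (∀ a : ℝ,
      (∫ z in (-π)..π, (cos z - (-a)) * exp (-U z + ρ * (-a) * cos z))
        = -∫ z in (-π)..π, (cos z - a) * exp (-U z + ρ * a * cos z)) := by
  have hpi : (-π) ≤ π := by linarith [pi_pos]
  set J : ℕ → ℝ := fun k => ∫ z in (-π)..π, cos z ^ k * exp (-U z) with hJ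
  -- odd moments vanish
  have hodd : ∀ k : ℕ, Odd k → J k = 0 := by
    intro k hk
    set f : ℝ → ℝ := fun z => cos z ^ k * exp (-U z) with hf
    have hper' : Function.Periodic f (2 * π) := by
      intro x
      simp only [hf]
      rw [Real.cos_add_two_pi, hper x]
    have h1 : (∫ z in (-π)..π, f (π - z)) = ∫ z in (0:ℝ)..(2*π), f z := by
      have := intervalIntegral.integral_comp_sub_left (a := -π) (b := π) f π
      simpa [sub_neg_eq_add, two_mul] using this
    have h2 : (∫ z in (0:ℝ)..(2*π), f z) = ∫ z in (-π)..π, f z := by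
      have := hper'.intervalIntegral_add_eq 0 (-π)
      simp only [zero_add] at this
      rw [this]
      norm_num [two_mul]
    have h3 : ∀ z, f (π - z) = -f z := by
      intro z
      simp only [hf]
      rw [Real.cos_pi_sub, hk.neg_pow, ← hsym z]
      ring
    have h4 : (∫ z in (-π)..π, f (π - z)) = -∫ z in (-π)..π, f z := by
      simp_rw [h3]
      exact intervalIntegral.integral_neg
    have := h4.symm.trans (h1.trans h2)
    have : J k = -J k := by simpa [hJ, hf] using this.symm
    linarith
  -- even moments positive
  have hpos : ∀ m : ℕ, 0 < J (2*m) := by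
    intro m
    have hc : Continuous fun z => cos z ^ (2*m) * exp (-U z) :=
      (Real.continuous_cos.pow _).mul (hU.neg.rexp)
    refine intervalIntegral.integral_pos (by linarith [pi_pos]) hc.continuousOn ?_ ?_
    · intro x _
      exact mul_nonneg (even_two_mul m |>.pow_nonneg _) (exp_pos _).le
    · refine ⟨0, ⟨by linarith [pi_pos], by linarith [pi_pos]⟩, by
        simp [Real.cos_zero, exp_pos]⟩
  -- main series expansion with all terms
  have key : ∀ a : ℝ,
      (∫ z in (-π)..π, (cos z - a) * exp (-U z + ρ * a * cos z)) =
      ∑' n : ℕ, (ρ * a) ^ n / (Nat.factorial n : ℝ) * (J (n+1) - a * J n) := by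
    intro a
    set g : ℕ → ℝ → ℝ := fun n z =>
      (ρ * a * cos z) ^ n / (Nat.factorial n : ℝ) * ((cos z - a) * exp (-U z)) with hg
    have hgc : ∀ n, Continuous (g n) := by
      intro n
      exact ((continuous_const.mul Real.continuous_cos).pow n |>.div_const _).mul
        ((Real.continuous_cos.sub continuous_const).mul (hU.neg.rexp))
    have hpt : ∀ z, (cos z - a) * exp (-U z + ρ * a * cos z) = ∑' n, g n z := by
      intro z
      have hexp : Real.exp (ρ * a * cos z)
          = ∑' n : ℕ, (ρ * a * cos z) ^ n / (Nat.factorial n : ℝ) := by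
        rw [Real.exp_eq_exp_ℝ, NormedSpace.exp_eq_tsum_div]
      rw [Real.exp_add, ← mul_assoc, mul_comm (cos z - a) (exp (-U z)), hexp,
        ← tsum_mul_left]
      congr 1; ext n; simp only [hg]; ring
    obtain ⟨C, hC0, hC⟩ : ∃ C, 0 ≤ C ∧ ∀ z ∈ Set.Icc (-π) π,
        |cos z - a| * exp (-U z) ≤ C := by
      obtain ⟨C, hC⟩ := (isCompact_Icc (a := -π) (b := π)).exists_bound_of_continuousOn
        ((Real.continuous_cos.sub continuous_const).mul (hU.neg.rexp)).continuousOn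
      refine ⟨max C 0, le_max_right _ _, fun z hz => ?_⟩
      calc |cos z - a| * exp (-U z) = ‖(cos z - a) * exp (-U z)‖ := by
            rw [norm_mul, Real.norm_eq_abs, Real.norm_eq_abs, abs_of_pos (exp_pos _)]
        _ ≤ C := hC z hz
        _ ≤ max C 0 := le_max_left _ _
    have hbound : ∀ n, ∀ z ∈ Set.Ioc (-π) π,
        ‖g n z‖ ≤ |ρ * a| ^ n / (Nat.factorial n : ℝ) * C := by
      intro n z hz
      have : ‖g n z‖ = |ρ * a * cos z| ^ n / (Nat.factorial n : ℝ)
          * (|cos z - a| * exp (-U z)) := by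
        simp only [hg, norm_mul, Real.norm_eq_abs, abs_div, abs_pow, abs_mul,
          Nat.abs_cast, abs_of_pos (exp_pos (-U z))]
      rw [this]
      have h1 : |ρ * a * cos z| ^ n ≤ |ρ * a| ^ n := by
        apply pow_le_pow_left₀ (abs_nonneg _)
        rw [abs_mul]
        nlinarith [abs_cos_le_one z, abs_nonneg (ρ * a), abs_nonneg (cos z)]
      have h2 : |cos z - a| * exp (-U z) ≤ C := hC z (Set.mem_Icc_of_Ioc hz)
      have hfac : (0:ℝ) < (Nat.factorial n : ℝ) := by positivity
      apply mul_le_mul (by gcongr) h2 (by positivity) (by positivity)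
    have hgint : ∀ n, IntegrableOn (g n) (Set.Ioc (-π) π) volume := fun n =>
      (hgc n).integrableOn_Ioc
    have hsum : Summable fun n => ∫ z in Set.Ioc (-π) π, ‖g n z‖ := by
      apply Summable.of_nonneg_of_le (fun n => integral_nonneg (fun z => norm_nonneg _))
        (fun n => ?_) (((Real.summable_pow_div_factorial |ρ * a|).mul_right (C * (2*π))))
      calc (∫ z in Set.Ioc (-π) π, ‖g n z‖)
          ≤ ∫ z in Set.Ioc (-π) π, |ρ * a| ^ n / (Nat.factorial n : ℝ) * C := by
            apply setIntegral_mono_on (hgint n).norm (integrableOn_const measure_Ioc_lt_top.ne)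
              measurableSet_Ioc (hbound n)
        _ = |ρ * a| ^ n / (Nat.factorial n : ℝ) * (C * (2*π)) := by
            rw [setIntegral_const, measureReal_def, Real.volume_Ioc, smul_eq_mul]
            rw [ENNReal.toReal_ofReal (by linarith [pi_pos])]
            ring
    rw [intervalIntegral.integral_of_le hpi]
    simp_rw [hpt]
    rw [← MeasureTheory.integral_tsum_of_summable_integral_norm hgint hsum]
    congr 1; ext n
    rw [← intervalIntegral.integral_of_le hpi]
    have he : ∀ z, g n z = (ρ * a) ^ n / (Nat.factorial n : ℝ) *
        (cos z ^ (n+1) * exp (-U z) - a * (cos z ^ n * exp (-U z))) := by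
      intro z; simp only [hg, mul_pow]; ring
    simp_rw [he]
    rw [intervalIntegral.integral_const_mul, intervalIntegral.integral_sub,
      intervalIntegral.integral_const_mul]
    · exact ((Real.continuous_cos.pow _).mul (hU.neg.rexp)).intervalIntegrable _ _
    · exact (continuous_const.mul
        ((Real.continuous_cos.pow _).mul (hU.neg.rexp))).intervalIntegrable _ _
  -- summability of the coefficient series
  have hK : ∀ k : ℕ, |J k| ≤ ∫ z in (-π)..π, exp (-U z) := by
    intro k
    calc |J k| ≤ ∫ z in (-π)..π, |cos z ^ k * exp (-U z)| :=
          intervalIntegral.abs_integral_le_integral_abs hpi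
      _ ≤ ∫ z in (-π)..π, exp (-U z) := by
          apply intervalIntegral.integral_mono_on hpi
          · exact (((Real.continuous_cos.pow _).mul (hU.neg.rexp)).abs).intervalIntegrable _ _
          · exact (hU.neg.rexp).intervalIntegrable _ _
          · intro x _
            rw [abs_mul, abs_pow, abs_of_pos (exp_pos _)]
            calc |cos x| ^ k * exp (-U x) ≤ 1 ^ k * exp (-U x) := by
                  gcongr; exact abs_cos_le_one x
              _ = exp (-U x) := by ring
  have hsc : ∀ a : ℝ, Summable fun n : ℕ =>
      (ρ * a) ^ n / (Nat.factorial n : ℝ) * (J (n+1) - a * J n) := by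
    intro a
    set K := ∫ z in (-π)..π, exp (-U z) with hKdef
    apply Summable.of_norm_bounded
      ((Real.summable_pow_div_factorial |ρ * a|).mul_right (K + |a| * K))
    intro n
    rw [Real.norm_eq_abs, abs_mul, abs_div, abs_pow, Nat.abs_cast]
    have h1 : |J (n+1) - a * J n| ≤ K + |a| * K := by
      calc |J (n+1) - a * J n| ≤ |J (n+1)| + |a * J n| := abs_sub _ _
        _ ≤ K + |a| * K := by
            rw [abs_mul]
            have h1 := hK (n+1)
            have h2 := hK n
            have h3 : 0 ≤ |a| := abs_nonneg a
            nlinarith [abs_nonneg (J n)]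
    have hfac : (0:ℝ) < (Nat.factorial n : ℝ) := by positivity
    exact mul_le_mul_of_nonneg_left h1 (by positivity)
  -- part 1
  have hmain : ∀ a : ℝ,
      (∫ z in (-π)..π, (cos z - a) * exp (-U z + ρ * a * cos z)) =
      ∑' n : ℕ, (a ^ (2 * n + 1) * ρ ^ (2 * n) / (Nat.factorial (2 * n) : ℝ))
        * J (2 * n) * (ρ * J (2 * n + 2) / ((2 * (n : ℝ) + 1) * J (2 * n)) - 1) := by
    intro a
    rw [key a]
    set c : ℕ → ℝ := fun n => (ρ * a) ^ n / (Nat.factorial n : ℝ) * (J (n+1) - a * J n)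
      with hc
    have he : Summable fun k => c (2 * k) :=
      (hsc a).comp_injective (fun x y h => by omega)
    have ho : Summable fun k => c (2 * k + 1) :=
      (hsc a).comp_injective (fun x y h => by omega)
    rw [← tsum_even_add_odd he ho, ← he.tsum_add ho]
    congr 1; funext k
    have hJodd1 : J (2 * k + 1) = 0 := hodd _ ⟨k, by ring⟩
    have hik : (2 * k + 1) + 1 = 2 * k + 2 := by ring
    have hc1 : c (2 * k) = (ρ * a) ^ (2*k) / (Nat.factorial (2*k) : ℝ) * (0 - a * J (2*k)) := by
      simp only [hc, hJodd1]
    have hc2 : c (2 * k + 1)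
        = (ρ * a) ^ (2*k+1) / (Nat.factorial (2*k+1) : ℝ) * (J (2*k+2) - a * 0) := by
      simp only [hc, hik, hJodd1]
    rw [hc1, hc2]
    have hfac : (Nat.factorial (2*k+1) : ℝ) = (2*(k:ℝ)+1) * (Nat.factorial (2*k) : ℝ) := by
      rw [Nat.factorial_succ]
      push_cast
      ring
    have hJpos := hpos k
    have hJne : J (2*k) ≠ 0 := ne_of_gt hJpos
    have hfacne : (Nat.factorial (2*k) : ℝ) ≠ 0 := by positivity
    have h2k1 : (2*(k:ℝ)+1) ≠ 0 := by positivity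
    rw [hfac]
    field_simp
    ring
  refine ⟨hmain, fun a => ?_⟩
  rw [hmain a, hmain (-a), ← tsum_neg]
  congr 1; funext n
  rw [Odd.neg_pow ⟨n, by ring⟩ a]
  ring
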